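/- arXiv:1811.05584 — 2 statements merged into one kernel-verified Lean document; each statement's English description precedes it below -/
import Mathlib

section
/- There exists ε > 0, independent of n, such that for p = 3/4 (so each ξ_j takes the value 1/√3 with probability 3/4 and the value −√3 with probability 1/4), every n ≥ 1, and every λ ∈ ℝ^n with ∑_{j=1}^n λ_j² = 1 and max_{1≤k≤n} λ_k² ≤ 0.99, one has 𝔼| ∑_{j=1}^n λ_j ξ_j | ≤ 1 − ε². -/
/-- The value of the random variable `ξ_j` associated with `p`: it takes the value
`√((1−p)/p)` (encoded by `true`) and `−√(p/(1−p))` (encoded by `false`). -/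
noncomputable def xiVal (p : ℝ) (b : Bool) : ℝ :=
  if b then Real.sqrt ((1 - p) / p) else -Real.sqrt (p / (1 - p))

/-- The probability weight: `true` (the value `√((1−p)/p)`) has probability `p`,
`false` (the value `−√(p/(1−p))`) has probability `1 − p`. -/
def wt (p : ℝ) (b : Bool) : ℝ := if b then p else 1 - p

/-- `𝔼|∑_{j=1}^n λ_j ξ_j|` for i.i.d. `ξ_1, …, ξ_n` associated with `p`, written as the
explicit expectation over the product space `Bool^n`. -/
noncomputable def expAbsSum (p : ℝ) (n : ℕ) (l : Fin n → ℝ) : ℝ :=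
  ∑ σ : Fin n → Bool, (∏ j, wt p (σ j)) * |∑ j, l j * xiVal p (σ j)|

namespace KD

noncomputable def xv : Bool → ℝ := xiVal (3/4)
noncomputable def w3 : Bool → ℝ := wt (3/4)

noncomputable def Ex (n : ℕ) (f : (Fin n → Bool) → ℝ) : ℝ :=
  ∑ σ : Fin n → Bool, (∏ j, w3 (σ j)) * f σ

noncomputable def Sm {n : ℕ} (l : Fin n → ℝ) (σ : Fin n → Bool) : ℝ :=
  ∑ j, l j * xv (σ j)

lemma w3_t : w3 true = 3/4 := by simp [w3, wt]
lemma w3_f : w3 false = 1/4 := by norm_num [w3, wt]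
lemma w3_nonneg (b : Bool) : 0 ≤ w3 b := by cases b <;> norm_num [w3, wt]

lemma s3_sq : Real.sqrt 3 ^ 2 = 3 := Real.sq_sqrt (by norm_num)
lemma s3_nonneg : (0:ℝ) ≤ Real.sqrt 3 := Real.sqrt_nonneg 3
lemma s3_lb : (1.7:ℝ) ≤ Real.sqrt 3 := by
  nlinarith [s3_sq, s3_nonneg]
lemma s3_ub : Real.sqrt 3 ≤ 1.8 := by
  nlinarith [s3_sq, s3_nonneg]

lemma xv_t : xv true = Real.sqrt 3 / 3 := by
  have h : ((1:ℝ) - 3/4) / (3/4) = (Real.sqrt 3 / 3) ^ 2 := by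
    rw [div_pow, s3_sq]; norm_num
  simp only [xv, xiVal, if_pos]
  rw [h, Real.sqrt_sq (by positivity)]

lemma xv_f : xv false = -Real.sqrt 3 := by
  have h : ((3:ℝ)/4) / (1 - 3/4) = 3 := by norm_num
  simp only [xv, xiVal]
  rw [if_neg (by simp), h]

lemma wprod_nonneg {n : ℕ} (σ : Fin n → Bool) : 0 ≤ ∏ j, w3 (σ j) :=
  Finset.prod_nonneg fun j _ => w3_nonneg _

lemma sumw (n : ℕ) : ∑ σ : Fin n → Bool, ∏ j, w3 (σ j) = 1 := by
  rw [← Fintype.prod_sum (fun (_ : Fin n) (b : Bool) => w3 b)]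
  have h : ∑ b : Bool, w3 b = 1 := by
    rw [Fintype.sum_bool, w3_t, w3_f]; norm_num
  simp only [h, Finset.prod_const_one]

lemma Ex_congr {n : ℕ} {f g : (Fin n → Bool) → ℝ} (h : ∀ σ, f σ = g σ) :
    Ex n f = Ex n g := by
  unfold Ex; exact Finset.sum_congr rfl fun σ _ => by rw [h]

lemma Ex_add {n : ℕ} (f g : (Fin n → Bool) → ℝ) :
    Ex n (fun σ => f σ + g σ) = Ex n f + Ex n g := by
  unfold Ex; simp [mul_add, Finset.sum_add_distrib]

lemma Ex_sub {n : ℕ} (f g : (Fin n → Bool) → ℝ) :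
    Ex n (fun σ => f σ - g σ) = Ex n f - Ex n g := by
  unfold Ex; simp [mul_sub, Finset.sum_sub_distrib]

lemma Ex_cmul {n : ℕ} (a : ℝ) (f : (Fin n → Bool) → ℝ) :
    Ex n (fun σ => a * f σ) = a * Ex n f := by
  unfold Ex; rw [Finset.mul_sum]
  exact Finset.sum_congr rfl fun σ _ => by ring

lemma Ex_const {n : ℕ} (a : ℝ) : Ex n (fun _ => a) = a := by
  unfold Ex
  rw [← Finset.sum_mul, sumw, one_mul]

lemma Ex_mono {n : ℕ} {f g : (Fin n → Bool) → ℝ} (h : ∀ σ, f σ ≤ g σ) :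
    Ex n f ≤ Ex n g :=
  Finset.sum_le_sum fun σ _ => mul_le_mul_of_nonneg_left (h σ) (wprod_nonneg σ)

lemma Ex_succ (n : ℕ) (f : (Fin (n+1) → Bool) → ℝ) :
    Ex (n+1) f = ∑ b, w3 b * Ex n (fun σ => f (Fin.cons b σ)) := by
  rw [Ex, ← (Fin.consEquiv (fun _ : Fin (n+1) => Bool)).sum_comp
      (fun σ => (∏ j, w3 (σ j)) * f σ), Fintype.sum_prod_type]
  refine Finset.sum_congr rfl fun b _ => ?_
  rw [Ex, Finset.mul_sum]
  refine Finset.sum_congr rfl fun σ _ => ?_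
  have hc : (Fin.consEquiv fun _ => Bool) (b, σ) = Fin.cons b σ := rfl
  rw [hc, Fin.prod_univ_succ]
  simp only [Fin.cons_zero, Fin.cons_succ]
  ring

lemma Sm_cons {n : ℕ} (l : Fin (n+1) → ℝ) (b : Bool) (σ : Fin n → Bool) :
    Sm l (Fin.cons b σ) = l 0 * xv b + Sm (fun j => l j.succ) σ := by
  simp [Sm, Fin.sum_univ_succ]

lemma Ex_expand1 {n : ℕ} (c : ℝ) (f : (Fin n → Bool) → ℝ) :
    Ex n (fun σ => c + f σ) = c + Ex n f := by
  rw [Ex_add (fun _ => c) f, Ex_const]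

lemma Ex_expand2 {n : ℕ} (c : ℝ) (f : (Fin n → Bool) → ℝ) :
    Ex n (fun σ => (c + f σ)^2)
      = c^2 + 2*c * Ex n f + Ex n (fun σ => f σ^2) := by
  have h : (fun σ => (c + f σ)^2)
      = fun σ => c^2 + (2*c * f σ + f σ^2) := funext fun σ => by ring
  rw [h, Ex_add (fun _ => c^2), Ex_add, Ex_cmul, Ex_const]; ring

lemma Ex_expand3 {n : ℕ} (c : ℝ) (f : (Fin n → Bool) → ℝ) :
    Ex n (fun σ => (c + f σ)^3)
      = c^3 + 3*c^2 * Ex n f + 3*c * Ex n (fun σ => f σ^2)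
        + Ex n (fun σ => f σ^3) := by
  have h : (fun σ => (c + f σ)^3)
      = fun σ => c^3 + (3*c^2 * f σ + (3*c * f σ^2 + f σ^3)) := funext fun σ => by ring
  rw [h, Ex_add (fun _ => c^3), Ex_add, Ex_add, Ex_cmul, Ex_cmul, Ex_const]; ring

lemma Ex_expand4 {n : ℕ} (c : ℝ) (f : (Fin n → Bool) → ℝ) :
    Ex n (fun σ => (c + f σ)^4)
      = c^4 + 4*c^3 * Ex n f + 6*c^2 * Ex n (fun σ => f σ^2)
        + 4*c * Ex n (fun σ => f σ^3) + Ex n (fun σ => f σ^4) := by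
  have h : (fun σ => (c + f σ)^4)
      = fun σ => c^4 + (4*c^3 * f σ + (6*c^2 * f σ^2 + (4*c * f σ^3 + f σ^4))) :=
    funext fun σ => by ring
  rw [h, Ex_add (fun _ => c^4), Ex_add, Ex_add, Ex_add, Ex_cmul, Ex_cmul, Ex_cmul,
    Ex_const]; ring

lemma Ex_expand6 {n : ℕ} (c : ℝ) (f : (Fin n → Bool) → ℝ) :
    Ex n (fun σ => (c + f σ)^6)
      = c^6 + 6*c^5 * Ex n f + 15*c^4 * Ex n (fun σ => f σ^2)
        + 20*c^3 * Ex n (fun σ => f σ^3) + 15*c^2 * Ex n (fun σ => f σ^4)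
        + 6*c * Ex n (fun σ => f σ^5) + Ex n (fun σ => f σ^6) := by
  have h : (fun σ => (c + f σ)^6)
      = fun σ => c^6 + (6*c^5 * f σ + (15*c^4 * f σ^2 + (20*c^3 * f σ^3
          + (15*c^2 * f σ^4 + (6*c * f σ^5 + f σ^6))))) :=
    funext fun σ => by ring
  rw [h, Ex_add (fun _ => c^6), Ex_add, Ex_add, Ex_add, Ex_add, Ex_add,
    Ex_cmul, Ex_cmul, Ex_cmul, Ex_cmul, Ex_cmul, Ex_const]; ring

lemma M1 : ∀ (n : ℕ) (l : Fin n → ℝ), Ex n (fun σ => Sm l σ) = 0 := by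
  intro n
  induction n with
  | zero => intro l; simp [Ex, Sm]
  | succ n ih =>
    intro l
    rw [Ex_succ]
    have hb : ∀ b, Ex n (fun σ => Sm l (Fin.cons b σ)) = l 0 * xv b := by
      intro b
      rw [Ex_congr (fun σ => Sm_cons l b σ), Ex_expand1, ih, add_zero]
    simp only [hb]
    rw [Fintype.sum_bool, w3_t, w3_f, xv_t, xv_f]
    ring

lemma M2 : ∀ (n : ℕ) (l : Fin n → ℝ),
    Ex n (fun σ => Sm l σ ^ 2) = ∑ j, l j ^ 2 := by
  intro n
  induction n with
  | zero => intro l; simp [Ex, Sm]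
  | succ n ih =>
    intro l
    rw [Ex_succ, Fin.sum_univ_succ]
    have hb : ∀ b, Ex n (fun σ => Sm l (Fin.cons b σ) ^ 2)
        = (l 0 * xv b)^2 + (∑ j : Fin n, l j.succ ^ 2) := by
      intro b
      have h1 : ∀ σ, Sm l (Fin.cons b σ) ^ 2
          = (l 0 * xv b + Sm (fun j => l j.succ) σ) ^ 2 := fun σ => by rw [Sm_cons]
      rw [Ex_congr h1, Ex_expand2, M1, ih]; ring
    simp only [hb]
    rw [Fintype.sum_bool, w3_t, w3_f, xv_t, xv_f]
    linear_combination ((l 0)^2/3) * s3_sq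

lemma M4 : ∀ (n : ℕ) (l : Fin n → ℝ),
    Ex n (fun σ => Sm l σ ^ 4) = 3 * (∑ j, l j ^ 2)^2 - 2/3 * ∑ j, l j ^ 4 := by
  intro n
  induction n with
  | zero => intro l; simp [Ex, Sm]
  | succ n ih =>
    intro l
    rw [Ex_succ, Fin.sum_univ_succ (f := fun j => l j ^ 2),
      Fin.sum_univ_succ (f := fun j => l j ^ 4)]
    have hb : ∀ b, Ex n (fun σ => Sm l (Fin.cons b σ) ^ 4)
        = (l 0 * xv b)^4 + 6*(l 0 * xv b)^2 * (∑ j : Fin n, l j.succ ^ 2)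
          + 4*(l 0 * xv b) * Ex n (fun σ => Sm (fun j => l j.succ) σ ^ 3)
          + (3 * (∑ j : Fin n, l j.succ ^ 2)^2 - 2/3 * ∑ j : Fin n, l j.succ ^ 4) := by
      intro b
      have h1 : ∀ σ, Sm l (Fin.cons b σ) ^ 4
          = (l 0 * xv b + Sm (fun j => l j.succ) σ) ^ 4 := fun σ => by rw [Sm_cons]
      rw [Ex_congr h1, Ex_expand4, M1, M2, ih]; ring
    simp only [hb]
    rw [Fintype.sum_bool, w3_t, w3_f, xv_t, xv_f]
    linear_combination ((l 0)^4 * ((Real.sqrt 3)^2 + 3) * (7/27) + 2 * (l 0)^2 * (∑ j : Fin n, l (Fin.succ j) ^ 2)) * s3_sq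

lemma M3 : ∀ (n : ℕ) (l : Fin n → ℝ), (∑ j, l j ^ 2) ≤ 1 →
    |Ex n (fun σ => Sm l σ ^ 3)| ≤ 6/5 * ∑ j, l j ^ 2 := by
  intro n
  induction n with
  | zero => intro l _; simp [Ex, Sm]
  | succ n ih =>
    intro l hl
    rw [Fin.sum_univ_succ (f := fun j => l j ^ 2)] at hl ⊢
    set T := ∑ j : Fin n, l j.succ ^ 2 with hT
    have hT0 : 0 ≤ T := Finset.sum_nonneg fun j _ => sq_nonneg _
    have hl0 : (l 0)^2 ≤ 1 := by nlinarith
    have hTle : T ≤ 1 := by nlinarith [sq_nonneg (l 0)]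
    set A3 := Ex n (fun σ => Sm (fun j => l j.succ) σ ^ 3) with hA3
    have ihA : |A3| ≤ 6/5 * T := ih _ hTle
    rw [Ex_succ]
    have hb : ∀ b, Ex n (fun σ => Sm l (Fin.cons b σ) ^ 3)
        = (l 0 * xv b)^3 + 3*(l 0 * xv b) * T + A3 := by
      intro b
      have h1 : ∀ σ, Sm l (Fin.cons b σ) ^ 3
          = (l 0 * xv b + Sm (fun j => l j.succ) σ) ^ 3 := fun σ => by rw [Sm_cons]
      rw [Ex_congr h1, Ex_expand3, M1, M2, ← hT, ← hA3]; ring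
    simp only [hb]
    rw [Fintype.sum_bool, w3_t, w3_f, xv_t, xv_f]
    have hval : 3/4 * ((l 0 * (Real.sqrt 3 / 3))^3 + 3*(l 0 * (Real.sqrt 3 / 3)) * T + A3)
        + 1/4 * ((l 0 * -Real.sqrt 3)^3 + 3*(l 0 * -Real.sqrt 3) * T + A3)
        = A3 - 2/3 * (l 0)^3 * Real.sqrt 3 := by
      linear_combination (-(2/9) * (l 0)^3 * Real.sqrt 3) * s3_sq
    rw [hval]
    have habs : |A3 - 2/3 * (l 0)^3 * Real.sqrt 3|
        ≤ |A3| + 2/3 * |l 0|^3 * Real.sqrt 3 := by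
      refine (abs_sub _ _).trans ?_
      have : |2/3 * (l 0)^3 * Real.sqrt 3| = 2/3 * |l 0|^3 * Real.sqrt 3 := by
        rw [abs_mul, abs_mul, abs_pow, abs_of_nonneg s3_nonneg, abs_of_nonneg]
        norm_num
      rw [this]
    have hl0' : |l 0| ≤ 1 := by
      rw [← abs_one]; exact abs_le_abs (by nlinarith [sq_abs (l 0), abs_nonneg (l 0)]) (by nlinarith [sq_abs (l 0), abs_nonneg (l 0)])
    have hcube : |l 0|^3 ≤ (l 0)^2 := by
      have : |l 0|^3 = |l 0| * (l 0)^2 := by rw [pow_succ, sq_abs]; ring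
      nlinarith [sq_nonneg (l 0)]
    nlinarith [s3_ub, s3_nonneg, abs_nonneg (l 0), pow_nonneg (abs_nonneg (l 0)) 3]

set_option maxHeartbeats 1000000 in
lemma M6 : ∀ (n : ℕ) (l : Fin n → ℝ), (∑ j, l j ^ 2) ≤ 1 →
    Ex n (fun σ => Sm l σ ^ 6) ≤ 150 * ∑ j, l j ^ 2 := by
  intro n
  induction n with
  | zero => intro l _; simp [Ex, Sm]
  | succ n ih =>
    intro l hl
    rw [Fin.sum_univ_succ (f := fun j => l j ^ 2)] at hl ⊢
    set T := ∑ j : Fin n, l j.succ ^ 2 with hT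
    have hT0 : 0 ≤ T := Finset.sum_nonneg fun j _ => sq_nonneg _
    have hl0 : (l 0)^2 ≤ 1 := by nlinarith
    have hTle : T ≤ 1 := by nlinarith [sq_nonneg (l 0)]
    set A3 := Ex n (fun σ => Sm (fun j => l j.succ) σ ^ 3) with hA3d
    set A4 := Ex n (fun σ => Sm (fun j => l j.succ) σ ^ 4) with hA4d
    set A5 := Ex n (fun σ => Sm (fun j => l j.succ) σ ^ 5) with hA5d
    set A6 := Ex n (fun σ => Sm (fun j => l j.succ) σ ^ 6) with hA6d
    have ihA3 : |A3| ≤ 6/5 * T := M3 n _ hTle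
    have ihA6 : A6 ≤ 150 * T := ih _ hTle
    have hQ0 : 0 ≤ ∑ j : Fin n, l j.succ ^ 4 := Finset.sum_nonneg fun j _ => by positivity
    have hA4 : A4 ≤ 3 * T := by
      rw [hA4d, M4]
      nlinarith
    clear_value A3 A4 A5 A6
    rw [Ex_succ]
    have hb : ∀ b, Ex n (fun σ => Sm l (Fin.cons b σ) ^ 6)
        = (l 0 * xv b)^6 + 15*(l 0 * xv b)^4 * T + 20*(l 0 * xv b)^3 * A3
          + 15*(l 0 * xv b)^2 * A4 + 6*(l 0 * xv b) * A5 + A6 := by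
      intro b
      have h1 : ∀ σ, Sm l (Fin.cons b σ) ^ 6
          = (l 0 * xv b + Sm (fun j => l j.succ) σ) ^ 6 := fun σ => by rw [Sm_cons]
      rw [Ex_congr h1, Ex_expand6, M1, M2, ← hT, ← hA3d, ← hA4d, ← hA5d, ← hA6d]; ring
    simp only [hb]
    rw [Fintype.sum_bool, w3_t, w3_f, xv_t, xv_f]
    set s := Real.sqrt 3 with hs
    have hval : 3/4 * ((l 0 * (s / 3))^6 + 15*(l 0 * (s / 3))^4 * T + 20*(l 0 * (s / 3))^3 * A3
          + 15*(l 0 * (s / 3))^2 * A4 + 6*(l 0 * (s / 3)) * A5 + A6)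
        + 1/4 * ((l 0 * -s)^6 + 15*(l 0 * -s)^4 * T + 20*(l 0 * -s)^3 * A3
          + 15*(l 0 * -s)^2 * A4 + 6*(l 0 * -s) * A5 + A6)
        = 61/9 * (l 0)^6 + 35 * (l 0)^4 * T - (40/3) * s * ((l 0)^3 * A3)
          + 15 * (l 0)^2 * A4 + A6 := by
      linear_combination ((61/243) * (l 0)^6 * (s^4 + 3*s^2 + 9)
        + (35/9) * (l 0)^4 * T * (s^2 + 3) - (40/9) * (l 0)^3 * s * A3
        + 5 * (l 0)^2 * A4) * s3_sq
    rw [hval]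
    have hl0' : |l 0| ≤ 1 := by
      nlinarith [sq_abs (l 0), abs_nonneg (l 0)]
    have hcube : |(l 0)^3| ≤ (l 0)^2 := by
      rw [abs_pow]
      have : |l 0|^3 = |l 0| * (l 0)^2 := by rw [pow_succ, sq_abs]; ring
      nlinarith [sq_nonneg (l 0), abs_nonneg (l 0)]
    have hX : -((l 0)^3 * A3) ≤ (l 0)^2 * (6/5 * T) := by
      have h1 : |(l 0)^3 * A3| ≤ (l 0)^2 * (6/5 * T) := by
        rw [abs_mul]
        exact mul_le_mul hcube ihA3 (abs_nonneg _) (sq_nonneg _)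
      nlinarith [neg_abs_le ((l 0)^3 * A3)]
    have hterm := mul_le_mul_of_nonneg_left hX s3_nonneg
    have h61 : 61/9*(l 0)^6 ≤ 61/9*(l 0)^2 := by
      nlinarith [hl0, sq_nonneg ((l 0)^2), sq_nonneg (l 0)]
    have h35 : 35*(l 0)^4*T ≤ 35*(l 0)^2 := by
      nlinarith [hl0, hT0, hTle, sq_nonneg (l 0), mul_nonneg (mul_nonneg (sq_nonneg (l 0)) (sq_nonneg (l 0))) (sub_nonneg.2 hTle)]
    have hA3t : (40/3) * (s * (-((l 0)^3 * A3))) ≤ 29 * (l 0)^2 := by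
      nlinarith [hterm, s3_ub, mul_nonneg (sub_nonneg.2 s3_ub) (mul_nonneg (sq_nonneg (l 0)) hT0),
        mul_nonneg (sq_nonneg (l 0)) (sub_nonneg.2 hTle)]
    have h15 : 15*(l 0)^2*A4 ≤ 45*(l 0)^2 := by
      nlinarith [hA4, hT0, hTle, sq_nonneg (l 0),
        mul_le_mul_of_nonneg_left hA4 (by positivity : (0:ℝ) ≤ 15 * (l 0)^2),
        mul_nonneg (mul_nonneg (sq_nonneg (l 0)) hT0) (sub_nonneg.2 hTle),
        mul_nonneg (sq_nonneg (l 0)) (sub_nonneg.2 hTle)]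
    nlinarith [h61, h35, hA3t, h15, ihA6, hT0, sq_nonneg (l 0)]

set_option maxHeartbeats 1000000 in
lemma main (n : ℕ) (l : Fin n → ℝ) (h1 : (∑ j, l j ^ 2) = 1)
    (h99 : ∀ k, l k ^ 2 ≤ 0.99) :
    Ex n (fun σ => |Sm l σ|) ≤ 1 - (1/20 : ℝ)^2 := by
  -- A = E (|S|-1)^2 = 2 - 2 E|S|
  set A := Ex n (fun σ => (|Sm l σ| - 1)^2) with hAd
  have hA : A = 2 - 2 * Ex n (fun σ => |Sm l σ|) := by
    have hpt : ∀ σ, (|Sm l σ| - 1)^2 = Sm l σ^2 - (2 * |Sm l σ| - 1) := by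
      intro σ
      have := sq_abs (Sm l σ)
      nlinarith [sq_abs (Sm l σ)]
    rw [hAd, Ex_congr hpt, Ex_sub, M2, h1,
      Ex_sub (fun σ => 2 * |Sm l σ|) (fun _ => (1:ℝ)), Ex_cmul, Ex_const]
    ring
  have hA0 : 0 ≤ A := by
    rw [hAd]
    have := Ex_mono (n := n) (f := fun _ => (0:ℝ)) (g := fun σ => (|Sm l σ| - 1)^2)
      (fun σ => sq_nonneg _)
    rwa [Ex_const] at this
  -- q = sum of 4th powers
  have hq : (∑ j, l j ^ 4) ≤ 0.99 := by
    have h : ∀ j : Fin n, l j ^ 4 ≤ 0.99 * l j ^ 2 := by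
      intro j
      have := mul_le_mul_of_nonneg_right (h99 j) (sq_nonneg (l j))
      nlinarith [this]
    calc (∑ j, l j ^ 4) ≤ ∑ j, 0.99 * l j ^ 2 := Finset.sum_le_sum fun j _ => h j
      _ = 0.99 := by rw [← Finset.mul_sum, h1]; norm_num
  -- V = E (S^2-1)^2 ≥ 4/3
  set V := Ex n (fun σ => (Sm l σ^2 - 1)^2) with hVd
  have hV : V = 2 - 2/3 * ∑ j, l j ^ 4 := by
    have hpt : ∀ σ, (Sm l σ^2 - 1)^2 = Sm l σ^4 - (2 * Sm l σ^2 - 1) := by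
      intro σ; ring
    rw [hVd, Ex_congr hpt, Ex_sub, M4, h1,
      Ex_sub (fun σ => 2 * Sm l σ^2) (fun _ => (1:ℝ)), Ex_cmul, M2, h1, Ex_const]
    ring
  have hV43 : 4/3 ≤ V := by rw [hV]; nlinarith
  -- W = E (S^2-1)^2 (|S|+1)^2 ≤ 302
  set W := Ex n (fun σ => (Sm l σ^2 - 1)^2 * (|Sm l σ| + 1)^2) with hWd
  have hW : W ≤ 302 := by
    have hpt : ∀ σ, (Sm l σ^2 - 1)^2 * (|Sm l σ| + 1)^2 ≤ 2 * Sm l σ^6 + 2 := by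
      intro σ
      set x := Sm l σ
      have h2 : (|x| + 1)^2 ≤ 2 * (x^2 + 1) := by
        nlinarith [sq_nonneg (|x| - 1), sq_abs x]
      calc (x^2 - 1)^2 * (|x| + 1)^2 ≤ (x^2 - 1)^2 * (2 * (x^2 + 1)) :=
            mul_le_mul_of_nonneg_left h2 (sq_nonneg _)
        _ ≤ 2 * x^6 + 2 := by nlinarith [sq_nonneg x, sq_nonneg (x^2)]
    have h3 := Ex_mono hpt
    have h4 : Ex n (fun σ => 2 * Sm l σ^6 + 2)
        = 2 * Ex n (fun σ => Sm l σ^6) + 2 := by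
      rw [Ex_add (fun σ => 2 * Sm l σ^6) (fun _ => (2:ℝ)), Ex_cmul, Ex_const]
    have h5 := M6 n l (le_of_eq h1)
    rw [hWd]
    calc Ex n (fun σ => (Sm l σ^2 - 1)^2 * (|Sm l σ| + 1)^2)
        ≤ Ex n (fun σ => 2 * Sm l σ^6 + 2) := h3
      _ = 2 * Ex n (fun σ => Sm l σ^6) + 2 := h4
      _ ≤ 302 := by rw [h1] at h5; linarith
  -- Cauchy-Schwarz : V^2 ≤ A * W
  have hCS : V^2 ≤ A * W := by
    set u := fun σ : Fin n → Bool =>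
      Real.sqrt (∏ j, w3 (σ j)) * |(|Sm l σ| - 1)| with hud
    set v := fun σ : Fin n → Bool =>
      Real.sqrt (∏ j, w3 (σ j)) * (|(|Sm l σ| - 1)| * (|Sm l σ| + 1)^2) with hvd
    have key := Finset.sum_mul_sq_le_sq_mul_sq Finset.univ u v
    have e1 : ∑ σ : Fin n → Bool, u σ * v σ = V := by
      rw [hVd, Ex]
      refine Finset.sum_congr rfl fun σ _ => ?_
      have hw := wprod_nonneg σ
      have hm : Real.sqrt (∏ j, w3 (σ j)) * Real.sqrt (∏ j, w3 (σ j))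
          = ∏ j, w3 (σ j) := Real.mul_self_sqrt hw
      have habs : |(|Sm l σ| - 1)| * |(|Sm l σ| - 1)| = (|Sm l σ| - 1)^2 := by
        rw [← abs_mul, abs_of_nonneg (by nlinarith [sq_nonneg (|Sm l σ| - 1)] : (0:ℝ) ≤ (|Sm l σ| - 1) * (|Sm l σ| - 1))]
        ring
      have hsq : (|Sm l σ| - 1)^2 * (|Sm l σ| + 1)^2 = (Sm l σ^2 - 1)^2 := by
        rw [← sq_abs (Sm l σ)]; ring
      calc u σ * v σ
          = (Real.sqrt (∏ j, w3 (σ j)) * Real.sqrt (∏ j, w3 (σ j)))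
            * ((|(|Sm l σ| - 1)| * |(|Sm l σ| - 1)|) * (|Sm l σ| + 1)^2) := by
            rw [hud, hvd]; ring
        _ = (∏ j, w3 (σ j)) * (Sm l σ^2 - 1)^2 := by rw [hm, habs, hsq]
    have e2 : ∑ σ : Fin n → Bool, u σ^2 = A := by
      rw [hAd, Ex]
      refine Finset.sum_congr rfl fun σ _ => ?_
      rw [hud, mul_pow, Real.sq_sqrt (wprod_nonneg σ), sq_abs]
    have e3 : ∑ σ : Fin n → Bool, v σ^2 = W := by
      rw [hWd, Ex]
      refine Finset.sum_congr rfl fun σ _ => ?_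
      have hsq : (|Sm l σ| - 1)^2 * (|Sm l σ| + 1)^2 = (Sm l σ^2 - 1)^2 := by
        rw [← sq_abs (Sm l σ)]; ring
      rw [hvd, mul_pow, Real.sq_sqrt (wprod_nonneg σ), mul_pow, sq_abs]
      calc (∏ j, w3 (σ j)) * ((|Sm l σ| - 1)^2 * ((|Sm l σ| + 1)^2)^2)
          = (∏ j, w3 (σ j)) * (((|Sm l σ| - 1)^2 * (|Sm l σ| + 1)^2) * (|Sm l σ| + 1)^2) := by
            ring
        _ = (∏ j, w3 (σ j)) * ((Sm l σ^2 - 1)^2 * (|Sm l σ| + 1)^2) := by rw [hsq]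
    rw [e1, e2, e3] at key
    exact key
  have hAW : V^2 ≤ A * 302 := by
    calc V^2 ≤ A * W := hCS
      _ ≤ A * 302 := mul_le_mul_of_nonneg_left hW hA0
  nlinarith [hAW, hV43, hA0, hA]

end KD

/-- For `p = 3/4` (so each `ξ_j` takes the value `1/√3` with probability `3/4` and
`−√3` with probability `1/4`), there is a dimension-free `ε > 0` such that for every
`n ≥ 1` and every unit vector `λ ∈ ℝ^n` with `max_k λ_k² ≤ 0.99` one has
`𝔼|∑ λ_j ξ_j| ≤ 1 − ε²`. -/
theorem khinchine_deficit_spread_case :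
    ∃ ε > (0 : ℝ),
      ∀ n : ℕ, 1 ≤ n → ∀ l : Fin n → ℝ, (∑ j, (l j) ^ 2) = 1 →
        (∀ k, (l k) ^ 2 ≤ 0.99) →
        expAbsSum (3 / 4) n l ≤ 1 - ε ^ 2 := by
  refine ⟨1/20, by norm_num, fun n _ l h1 h99 => ?_⟩
  exact KD.main n l h1 h99
end

section
/- For every n ≥ 1 and every g : {−1,1}^n → ℝ one has ∫₀^∞ ‖∇(P_t g)‖_∞ dt ≤ (π/2) · ‖g‖_∞. -/
/-- Expectation with respect to the uniform probability measure on the Hamming cube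
`{-1,1}^n`, encoded as `Fin n → Bool`. -/
noncomputable def cubeE {n : ℕ} (f : (Fin n → Bool) → ℝ) : ℝ :=
  (∑ x : Fin n → Bool, f x) / 2 ^ n

/-- The `j`-th discrete partial derivative on the Hamming cube. -/
noncomputable def pderiv {n : ℕ} (j : Fin n) (f : (Fin n → Bool) → ℝ)
    (x : Fin n → Bool) : ℝ :=
  (f (Function.update x j true) - f (Function.update x j false)) / 2

/-- The gradient length `|∇f|(x) = (∑_j (∂_j f(x))²)^{1/2}`. -/
noncomputable def gradLen {n : ℕ} (f : (Fin n → Bool) → ℝ) (x : Fin n → Bool) : ℝ :=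
  Real.sqrt (∑ j, (pderiv j f x) ^ 2)

/-- The sup norm `‖f‖_∞ = max_x |f(x)|` on the Hamming cube. -/
noncomputable def supNorm {n : ℕ} (f : (Fin n → Bool) → ℝ) : ℝ :=
  ⨆ x : Fin n → Bool, |f x|

/-- The coordinate value `x_i = ±1` of a Boolean-encoded cube point. -/
def chi (b : Bool) : ℝ := if b then 1 else -1

/-- The Walsh character `x^S = ∏_{i∈S} x_i`. -/
noncomputable def walsh {n : ℕ} (S : Finset (Fin n)) (x : Fin n → Bool) : ℝ :=
  ∏ i ∈ S, chi (x i)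

/-- The Fourier–Walsh coefficient `f̂(S) = 𝔼[f · x^S]`. -/
noncomputable def walshCoeff {n : ℕ} (f : (Fin n → Bool) → ℝ)
    (S : Finset (Fin n)) : ℝ :=
  cubeE (fun x => f x * walsh S x)

/-- The heat semigroup on the Hamming cube: `P_t f = ∑_S e^{−t|S|} f̂(S) x^S`. -/
noncomputable def heat {n : ℕ} (t : ℝ) (f : (Fin n → Bool) → ℝ)
    (x : Fin n → Bool) : ℝ :=
  ∑ S : Finset (Fin n), Real.exp (-t * S.card) * walshCoeff f S * walsh S x

/-! ### Auxiliary material -/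

open Finset

/-- The Mehler-type kernel of the heat semigroup. -/
noncomputable def ker {n : ℕ} (r : ℝ) (x y : Fin n → Bool) : ℝ :=
  ∏ i, (1 + r * chi (x i) * chi (y i)) / 2

noncomputable def vv (r : ℝ) (a b : Bool) : ℝ :=
  r * chi b / (1 + r * chi a * chi b)

lemma one_add_pos {r : ℝ} (h0 : 0 ≤ r) (h1 : r < 1) (a b : Bool) :
    0 < 1 + r * chi a * chi b := by
  cases a <;> cases b <;> simp [chi] <;> nlinarith

lemma helper1 {A c : ℝ} (hA : A ≠ 0) : A / 2 * (c / A) = c / 2 := by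
  field_simp

lemma helper2 {A c : ℝ} (hA : A ≠ 0) : A / 2 * (c / A) * (c / A) = c ^ 2 / (2 * A) := by
  field_simp

lemma sum_prod_bool {n : ℕ} (h : Fin n → Bool → ℝ) :
    ∑ y : Fin n → Bool, ∏ i, h i (y i) = ∏ i, (h i false + h i true) := by
  classical
  have key := Finset.prod_univ_sum (fun _ : Fin n => (Finset.univ : Finset Bool)) h
  simp only [Fintype.piFinset_univ] at key
  rw [← key]
  refine Finset.prod_congr rfl fun i _ => ?_
  rw [Fintype.sum_bool]
  ring

lemma ker_nonneg {n : ℕ} {r : ℝ} (h0 : 0 ≤ r) (h1 : r < 1) (x y : Fin n → Bool) :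
    0 ≤ ker r x y :=
  Finset.prod_nonneg fun _ _ => div_nonneg (one_add_pos h0 h1 _ _).le (by norm_num)

lemma P_sum (r : ℝ) (a : Bool) :
    (1 + r * chi a * chi false) / 2 + (1 + r * chi a * chi true) / 2 = 1 := by
  cases a <;> simp [chi] <;> ring

lemma sum_ker {n : ℕ} (r : ℝ) (x : Fin n → Bool) : ∑ y, ker r x y = 1 := by
  unfold ker
  rw [sum_prod_bool (fun i b => (1 + r * chi (x i) * chi b) / 2)]
  exact Finset.prod_eq_one fun i _ => P_sum r (x i)

lemma walsh_prod {n : ℕ} (r : ℝ) (x y : Fin n → Bool) :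
    ∑ S : Finset (Fin n), r ^ S.card * walsh S x * walsh S y
      = ∏ i, (1 + r * chi (x i) * chi (y i)) := by
  classical
  have h := Finset.prod_add (fun i : Fin n => r * chi (x i) * chi (y i))
    (fun _ => (1 : ℝ)) Finset.univ
  simp only [Finset.prod_const_one, mul_one, Finset.powerset_univ] at h
  have h2 : (∏ i, (1 + r * chi (x i) * chi (y i)))
      = ∑ S : Finset (Fin n), ∏ i ∈ S, (r * chi (x i) * chi (y i)) := by
    rw [← h]; exact Finset.prod_congr rfl fun i _ => by ring
  rw [h2]
  refine Finset.sum_congr rfl fun S _ => ?_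
  rw [walsh, walsh, Finset.prod_mul_distrib, Finset.prod_mul_distrib, Finset.prod_const]

lemma heat_eq_ker {n : ℕ} (t : ℝ) (g : (Fin n → Bool) → ℝ) (x : Fin n → Bool) :
    heat t g x = ∑ y, ker (Real.exp (-t)) x y * g y := by
  classical
  set r := Real.exp (-t) with hr
  have he : ∀ S : Finset (Fin n), Real.exp (-t * S.card) = r ^ S.card := fun S => by
    rw [hr, mul_comm, Real.exp_nat_mul]
  have lhs : heat t g x
      = ∑ S : Finset (Fin n), ∑ z, r ^ S.card * walsh S x * walsh S z * g z / 2 ^ n := by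
    unfold heat walshCoeff cubeE
    refine Finset.sum_congr rfl fun S _ => ?_
    rw [he S, Finset.sum_div, Finset.mul_sum, Finset.sum_mul]
    refine Finset.sum_congr rfl fun z _ => by ring
  rw [lhs, Finset.sum_comm]
  refine Finset.sum_congr rfl fun z _ => ?_
  have : ∑ S : Finset (Fin n), r ^ S.card * walsh S x * walsh S z * g z / 2 ^ n
      = (∑ S : Finset (Fin n), r ^ S.card * walsh S x * walsh S z) * g z / 2 ^ n := by
    rw [Finset.sum_mul, Finset.sum_div]
  rw [this, walsh_prod]
  unfold ker
  rw [Finset.prod_div_distrib, Finset.prod_const, Finset.card_univ, Fintype.card_fin]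
  ring

lemma pderiv_heat {n : ℕ} {t : ℝ} (ht : 0 < t) (g : (Fin n → Bool) → ℝ) (j : Fin n)
    (x : Fin n → Bool) :
    pderiv j (heat t g) x
      = ∑ y, ker (Real.exp (-t)) x y * vv (Real.exp (-t)) (x j) (y j) * g y := by
  classical
  set r := Real.exp (-t) with hr
  have h0 : 0 < r := Real.exp_pos _
  have h1 : r < 1 := by rw [hr, Real.exp_lt_one_iff]; linarith
  unfold pderiv
  rw [heat_eq_ker, heat_eq_ker, ← hr, ← Finset.sum_sub_distrib, Finset.sum_div]
  refine Finset.sum_congr rfl fun y _ => ?_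
  have hker : ∀ b : Bool, ker r (Function.update x j b) y
      = ((1 + r * chi b * chi (y j)) / 2)
        * ∏ i ∈ Finset.univ.erase j, (1 + r * chi (x i) * chi (y i)) / 2 := by
    intro b
    unfold ker
    rw [← Finset.mul_prod_erase Finset.univ _ (Finset.mem_univ j), Function.update_self]
    congr 1
    refine Finset.prod_congr rfl fun i hi => ?_
    rw [Function.update_of_ne (Finset.ne_of_mem_erase hi)]
  have hker2 : ker r x y = ((1 + r * chi (x j) * chi (y j)) / 2)
      * ∏ i ∈ Finset.univ.erase j, (1 + r * chi (x i) * chi (y i)) / 2 := by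
    unfold ker
    rw [← Finset.mul_prod_erase Finset.univ _ (Finset.mem_univ j)]
  have hne : 1 + r * chi (x j) * chi (y j) ≠ 0 := (one_add_pos h0.le h1 _ _).ne'
  rw [hker true, hker false, hker2]
  set Q := ∏ i ∈ Finset.univ.erase j, (1 + r * chi (x i) * chi (y i)) / 2 with hQ
  unfold vv
  have hc1 : chi true = 1 := rfl
  have hc2 : chi false = -1 := rfl
  rw [hc1, hc2]
  rw [show (1 + r * chi (x j) * chi (y j)) / 2 * Q
        * (r * chi (y j) / (1 + r * chi (x j) * chi (y j))) * g y
      = (1 + r * chi (x j) * chi (y j)) / 2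
        * (r * chi (y j) / (1 + r * chi (x j) * chi (y j))) * (Q * g y) from by ring,
    helper1 hne]
  ring

lemma vv_sum {r : ℝ} (h0 : 0 < r) (h1 : r < 1) (a : Bool) :
    (1 + r * chi a * chi false) / 2 * vv r a false
      + (1 + r * chi a * chi true) / 2 * vv r a true = 0 := by
  unfold vv
  rw [helper1 (one_add_pos h0.le h1 a false).ne', helper1 (one_add_pos h0.le h1 a true).ne']
  have hc1 : chi true = 1 := rfl
  have hc2 : chi false = -1 := rfl
  rw [hc1, hc2]; ring

lemma vv_sq_sum {r : ℝ} (h0 : 0 < r) (h1 : r < 1) (a : Bool) :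
    (1 + r * chi a * chi false) / 2 * vv r a false * vv r a false
      + (1 + r * chi a * chi true) / 2 * vv r a true * vv r a true
      = r ^ 2 / (1 - r ^ 2) := by
  have hA1 : (1 + r * chi a * chi false) ≠ 0 := (one_add_pos h0.le h1 a false).ne'
  have hA2 : (1 + r * chi a * chi true) ≠ 0 := (one_add_pos h0.le h1 a true).ne'
  have e5 : (1 : ℝ) - r ^ 2 ≠ 0 := by nlinarith
  have d1 : (2 : ℝ) * (1 + r * chi a * chi false) ≠ 0 := mul_ne_zero two_ne_zero hA1
  have d2 : (2 : ℝ) * (1 + r * chi a * chi true) ≠ 0 := mul_ne_zero two_ne_zero hA2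
  unfold vv
  rw [helper2 hA1, helper2 hA2, div_add_div _ _ d1 d2, div_eq_div_iff (mul_ne_zero d1 d2) e5]
  cases a <;> norm_num [chi] <;> ring

lemma ortho {n : ℕ} {r : ℝ} (h0 : 0 < r) (h1 : r < 1) (x : Fin n → Bool) (j k : Fin n) :
    ∑ y, ker r x y * vv r (x j) (y j) * vv r (x k) (y k)
      = if j = k then r ^ 2 / (1 - r ^ 2) else 0 := by
  classical
  have hform : ∀ y : Fin n → Bool, ker r x y * vv r (x j) (y j) * vv r (x k) (y k)
      = ∏ i, (((1 + r * chi (x i) * chi (y i)) / 2)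
          * (if i = j then vv r (x j) (y i) else 1)
          * (if i = k then vv r (x k) (y i) else 1)) := by
    intro y
    rw [Finset.prod_mul_distrib, Finset.prod_mul_distrib,
      Fintype.prod_ite_eq' j (fun i => vv r (x j) (y i)),
      Fintype.prod_ite_eq' k (fun i => vv r (x k) (y i))]
    rfl
  rw [Finset.sum_congr rfl fun y _ => hform y,
    sum_prod_bool (fun i b => ((1 + r * chi (x i) * chi b) / 2)
      * (if i = j then vv r (x j) b else 1) * (if i = k then vv r (x k) b else 1))]
  rcases eq_or_ne j k with rfl | hjk
  · rw [if_pos rfl]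
    rw [Finset.prod_eq_single j ?side ?notmem]
    · simp only [if_pos rfl]
      exact vv_sq_sum h0 h1 (x j)
    case side =>
      intro i _ hij
      simp only [if_neg hij]
      rw [mul_one, mul_one, mul_one, mul_one]
      exact P_sum r (x i)
    case notmem =>
      intro h; exact absurd (Finset.mem_univ j) h
  · rw [if_neg hjk]
    apply Finset.prod_eq_zero (Finset.mem_univ j)
    simp only [if_pos rfl, if_neg hjk]
    rw [mul_one, mul_one]
    exact vv_sum h0 h1 (x j)

lemma grad_bound {n : ℕ} {t : ℝ} (ht : 0 < t) (g : (Fin n → Bool) → ℝ) (x : Fin n → Bool) :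
    gradLen (heat t g) x ≤ Real.exp (-t) / Real.sqrt (1 - Real.exp (-t) ^ 2) * supNorm g := by
  classical
  set r := Real.exp (-t) with hr
  have h0 : 0 < r := Real.exp_pos _
  have h1 : r < 1 := by rw [hr, Real.exp_lt_one_iff]; linarith
  have hr2 : 0 < 1 - r ^ 2 := by nlinarith
  set K : ℝ := r / Real.sqrt (1 - r ^ 2) with hK
  have hK0 : 0 ≤ K := div_nonneg h0.le (Real.sqrt_nonneg _)
  set M : ℝ := supNorm g with hM
  have hMy : ∀ y, |g y| ≤ M := fun y =>
    le_ciSup (f := fun z => |g z|) (Set.Finite.bddAbove (Set.finite_range _)) y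
  have hM0 : 0 ≤ M := le_trans (abs_nonneg _) (hMy fun _ => false)
  set D : Fin n → ℝ := fun j => pderiv j (heat t g) x with hD
  set S : ℝ := ∑ j, D j ^ 2 with hSdef
  have hS0 : 0 ≤ S := Finset.sum_nonneg fun _ _ => sq_nonneg _
  set U : (Fin n → Bool) → ℝ := fun y => ∑ j, D j * vv r (x j) (y j) with hU
  have hDj : ∀ j, D j = ∑ y, ker r x y * vv r (x j) (y j) * g y := fun j =>
    pderiv_heat ht g j x
  -- S = ∑_y ker · g · U
  have hSU : S = ∑ y, ker r x y * g y * U y := by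
    rw [hSdef]
    calc ∑ j, D j ^ 2
        = ∑ j, ∑ y, D j * (ker r x y * vv r (x j) (y j) * g y) := by
          refine Finset.sum_congr rfl fun j _ => ?_
          rw [sq]
          nth_rewrite 2 [hDj j]
          rw [Finset.mul_sum]
      _ = ∑ y, ∑ j, D j * (ker r x y * vv r (x j) (y j) * g y) := Finset.sum_comm
      _ = ∑ y, ker r x y * g y * U y := by
          refine Finset.sum_congr rfl fun y _ => ?_
          rw [hU, Finset.mul_sum]
          exact Finset.sum_congr rfl fun j _ => by ring
  -- second moment of U
  have hU2 : ∑ y, ker r x y * U y ^ 2 = S * (r ^ 2 / (1 - r ^ 2)) := by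
    have expand : ∀ y, ker r x y * U y ^ 2
        = ∑ j, ∑ k, D j * D k * (ker r x y * vv r (x j) (y j) * vv r (x k) (y k)) := by
      intro y
      rw [hU, sq, Finset.sum_mul_sum, Finset.mul_sum]
      refine Finset.sum_congr rfl fun j _ => ?_
      rw [Finset.mul_sum]
      exact Finset.sum_congr rfl fun k _ => by ring
    rw [Finset.sum_congr rfl fun y _ => expand y, Finset.sum_comm]
    have swap : ∀ j, (∑ y, ∑ k, D j * D k * (ker r x y * vv r (x j) (y j) * vv r (x k) (y k)))
        = ∑ k, D j * D k * (if j = k then r ^ 2 / (1 - r ^ 2) else 0) := by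
      intro j
      rw [Finset.sum_comm]
      refine Finset.sum_congr rfl fun k _ => ?_
      rw [← Finset.mul_sum, ortho h0 h1 x j k]
    rw [Finset.sum_congr rfl fun j _ => swap j]
    have single : ∀ j : Fin n, (∑ k, D j * D k * (if j = k then r ^ 2 / (1 - r ^ 2) else 0))
        = D j ^ 2 * (r ^ 2 / (1 - r ^ 2)) := by
      intro j
      rw [Finset.sum_eq_single j]
      · rw [if_pos rfl, sq]; ring
      · intro k _ hkj
        rw [if_neg (fun h => hkj h.symm), mul_zero]
      · intro h; exact absurd (Finset.mem_univ j) h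
    rw [Finset.sum_congr rfl fun j _ => single j, ← Finset.sum_mul, hSdef]
  -- Cauchy–Schwarz
  have hCS : (∑ y, ker r x y * |U y|) ^ 2 ≤ S * (r ^ 2 / (1 - r ^ 2)) := by
    have cs := Finset.sum_mul_sq_le_sq_mul_sq Finset.univ
      (fun y => Real.sqrt (ker r x y)) (fun y => Real.sqrt (ker r x y) * |U y|)
    have e1 : ∀ y : Fin n → Bool,
        Real.sqrt (ker r x y) * (Real.sqrt (ker r x y) * |U y|) = ker r x y * |U y| := by
      intro y
      rw [← mul_assoc, Real.mul_self_sqrt (ker_nonneg h0.le h1 x y)]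
    have e2 : ∀ y : Fin n → Bool, Real.sqrt (ker r x y) ^ 2 = ker r x y := fun y =>
      Real.sq_sqrt (ker_nonneg h0.le h1 x y)
    have e3 : ∀ y : Fin n → Bool,
        (Real.sqrt (ker r x y) * |U y|) ^ 2 = ker r x y * U y ^ 2 := by
      intro y
      rw [mul_pow, Real.sq_sqrt (ker_nonneg h0.le h1 x y), sq_abs]
    rw [Finset.sum_congr rfl fun y _ => e1 y, Finset.sum_congr rfl fun y _ => e2 y,
      Finset.sum_congr rfl fun y _ => e3 y, sum_ker, one_mul, hU2] at cs
    exact cs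
  -- the sqrt of the second moment
  have hsqrt : Real.sqrt (S * (r ^ 2 / (1 - r ^ 2))) = Real.sqrt S * K := by
    rw [Real.sqrt_mul hS0, Real.sqrt_div (sq_nonneg r), Real.sqrt_sq h0.le, hK]
  have hT : ∑ y, ker r x y * |U y| ≤ Real.sqrt S * K := by
    rw [← hsqrt]
    refine Real.le_sqrt_of_sq_le ?_
    exact hCS
  have hS_le : S ≤ M * (Real.sqrt S * K) := by
    refine le_trans ?_ (by
      have : ∑ y, ker r x y * |U y| ≤ Real.sqrt S * K := hT
      exact mul_le_mul_of_nonneg_left this hM0)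
    rw [hSU, Finset.mul_sum]
    refine Finset.sum_le_sum fun y _ => ?_
    have hky := ker_nonneg h0.le h1 x y
    calc ker r x y * g y * U y ≤ |ker r x y * g y * U y| := le_abs_self _
      _ = ker r x y * |g y| * |U y| := by rw [abs_mul, abs_mul, abs_of_nonneg hky]
      _ ≤ M * (ker r x y * |U y|) := by
          nlinarith [mul_nonneg (mul_nonneg (sub_nonneg.2 (hMy y)) hky) (abs_nonneg (U y))]
  -- conclude
  have hgrad : gradLen (heat t g) x = Real.sqrt S := rfl
  rw [hgrad]
  rcases eq_or_lt_of_le (Real.sqrt_nonneg S) with hz | hp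
  · rw [← hz]
    exact mul_nonneg (div_nonneg h0.le (Real.sqrt_nonneg _)) hM0
  · have hSS : Real.sqrt S * Real.sqrt S ≤ (K * M) * Real.sqrt S := by
      rw [Real.mul_self_sqrt hS0]
      calc S ≤ M * (Real.sqrt S * K) := hS_le
        _ = (K * M) * Real.sqrt S := by ring
    have := le_of_mul_le_mul_right hSS hp
    calc Real.sqrt S ≤ K * M := this
      _ = r / Real.sqrt (1 - r ^ 2) * M := by rw [hK]

lemma supNorm_grad_bound {n : ℕ} {t : ℝ} (ht : 0 < t) (g : (Fin n → Bool) → ℝ) :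
    supNorm (gradLen (heat t g))
      ≤ Real.exp (-t) / Real.sqrt (1 - Real.exp (-t) ^ 2) * supNorm g := by
  show (⨆ x : Fin n → Bool, |gradLen (heat t g) x|) ≤ _
  refine ciSup_le fun x => ?_
  have h0 : 0 ≤ gradLen (heat t g) x := Real.sqrt_nonneg _
  rw [abs_of_nonneg h0]
  exact grad_bound ht g x

noncomputable def phi (t : ℝ) : ℝ := Real.exp (-t) / Real.sqrt (1 - Real.exp (-t) ^ 2)

lemma phi_nonneg (t : ℝ) : 0 ≤ phi t :=
  div_nonneg (Real.exp_pos _).le (Real.sqrt_nonneg _)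

lemma hasDerivAt_F {t : ℝ} (ht : 0 < t) :
    HasDerivAt (fun s => -Real.arcsin (Real.exp (-s))) (phi t) t := by
  have h1 : Real.exp (-t) < 1 := by rw [Real.exp_lt_one_iff]; linarith
  have h0 : (0 : ℝ) < Real.exp (-t) := Real.exp_pos _
  have hexp : HasDerivAt (fun s : ℝ => Real.exp (-s)) (-Real.exp (-t)) t := by
    have := (Real.hasDerivAt_exp (-t)).comp t (hasDerivAt_neg t)
    simpa [Function.comp_def] using this
  have harc := (Real.hasDerivAt_arcsin (by linarith : Real.exp (-t) ≠ -1) h1.ne).comp t hexp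
  have hneg := harc.neg
  refine hneg.congr_deriv ?_
  unfold phi
  ring

lemma integrable_phi : MeasureTheory.IntegrableOn phi (Set.Ioi (0 : ℝ)) ∧
    ∫ t in Set.Ioi (0 : ℝ), phi t = Real.pi / 2 := by
  have hcont : ContinuousWithinAt (fun s => -Real.arcsin (Real.exp (-s))) (Set.Ici 0) 0 :=
    ((Real.continuous_arcsin.comp (Real.continuous_exp.comp continuous_neg)).neg).continuousWithinAt
  have hderiv : ∀ s ∈ Set.Ioi (0 : ℝ),
      HasDerivAt (fun s => -Real.arcsin (Real.exp (-s))) (phi s) s :=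
    fun s hs => hasDerivAt_F hs
  have hpos : ∀ s ∈ Set.Ioi (0 : ℝ), 0 ≤ phi s := fun s _ => phi_nonneg s
  have htop : Filter.Tendsto (fun s => -Real.arcsin (Real.exp (-s))) Filter.atTop (nhds 0) := by
    have h1 : Filter.Tendsto (fun s : ℝ => Real.exp (-s)) Filter.atTop (nhds 0) :=
      Real.tendsto_exp_neg_atTop_nhds_zero
    have h2 := (Real.continuous_arcsin.tendsto 0).comp h1
    rw [Real.arcsin_zero] at h2
    simpa using h2.neg
  constructor
  · exact MeasureTheory.integrableOn_Ioi_deriv_of_nonneg hcont hderiv hpos htop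
  · rw [MeasureTheory.integral_Ioi_of_hasDerivAt_of_nonneg hcont hderiv hpos htop]
    simp [Real.arcsin_one]

lemma measurable_phi : Measurable phi := by
  have h1 : Measurable fun t : ℝ => Real.exp (-t) :=
    Real.measurable_exp.comp measurable_neg
  exact h1.div ((Real.continuous_sqrt.measurable).comp
    (measurable_const.sub (h1.pow_const 2)))

/-- For every `n ≥ 1` and every `g : {−1,1}^n → ℝ`,
`∫₀^∞ ‖∇(P_t g)‖_∞ dt ≤ (π/2) ‖g‖_∞` (stated with the lower Lebesgue integral of the
nonnegative integrand). -/
theorem integral_grad_heat_sup_bound (n : ℕ) (hn : 1 ≤ n)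
    (g : (Fin n → Bool) → ℝ) :
    ∫⁻ t in Set.Ioi (0 : ℝ), ENNReal.ofReal (supNorm (gradLen (heat t g)))
      ≤ ENNReal.ofReal (Real.pi / 2 * supNorm g) := by
  set M : ℝ := supNorm g with hM
  have hM0 : 0 ≤ M :=
    le_trans (abs_nonneg (g fun _ => false))
      (le_ciSup (f := fun z => |g z|) (Set.Finite.bddAbove (Set.finite_range _)) fun _ => false)
  have hmeas : Measurable fun t => ENNReal.ofReal (phi t * M) :=
    (measurable_phi.mul_const M).ennreal_ofReal
  calc ∫⁻ t in Set.Ioi (0 : ℝ), ENNReal.ofReal (supNorm (gradLen (heat t g)))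
      ≤ ∫⁻ t in Set.Ioi (0 : ℝ), ENNReal.ofReal (phi t * M) := by
        refine MeasureTheory.setLIntegral_mono hmeas fun t ht => ?_
        exact ENNReal.ofReal_le_ofReal (supNorm_grad_bound ht g)
    _ = ∫⁻ t in Set.Ioi (0 : ℝ), ENNReal.ofReal (phi t) * ENNReal.ofReal M := by
        refine MeasureTheory.lintegral_congr fun t => ?_
        rw [ENNReal.ofReal_mul (phi_nonneg t)]
    _ = (∫⁻ t in Set.Ioi (0 : ℝ), ENNReal.ofReal (phi t)) * ENNReal.ofReal M :=
        MeasureTheory.lintegral_mul_const' (ENNReal.ofReal M) _ ENNReal.ofReal_ne_top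
    _ = ENNReal.ofReal (Real.pi / 2) * ENNReal.ofReal M := by
        rw [← MeasureTheory.ofReal_integral_eq_lintegral_ofReal integrable_phi.1
          (Filter.Eventually.of_forall phi_nonneg), integrable_phi.2]
    _ = ENNReal.ofReal (Real.pi / 2 * M) :=
        (ENNReal.ofReal_mul (by positivity)).symm
end
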